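/- Let α, β, θ > 0 and let F(x) = 1 − (1 − exp(−(α/x + β/(2x²))))^θ for x > 0 be the IGLFR CDF. Set L = log(1 − (1/2)^{1/θ}) (note L < 0) and define M = (−α − √(α² − 2βL)) / (2L). Then M > 0 and F(M) = 1/2; that is, M is the median of the IGLFR distribution. -/
import Mathlib


open Real

theorem iglfr_median
    (α β θ : ℝ) (hα : 0 < α) (hβ : 0 < β) (hθ : 0 < θ)
    (L M : ℝ)
    (hL : L = Real.log (1 - (1 / 2 : ℝ) ^ (1 / θ)))
    (hM : M = (-α - Real.sqrt (α ^ 2 - 2 * β * L)) / (2 * L)) :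
    L < 0 ∧ 0 < M ∧
      1 - (1 - Real.exp (-(α / M + β / (2 * M ^ 2)))) ^ θ = 1 / 2 := by
  set c : ℝ := (1 / 2 : ℝ) ^ (1 / θ) with hc
  have hc0 : 0 < c := Real.rpow_pos_of_pos (by norm_num) _
  have hc1 : c < 1 := Real.rpow_lt_one (by norm_num) (by norm_num) (by positivity)
  have h1c : 0 < 1 - c := by linarith
  have hLneg : L < 0 := by
    rw [hL]; exact Real.log_neg h1c (by linarith)
  have hdisc : 0 ≤ α ^ 2 - 2 * β * L := by nlinarith
  set s : ℝ := Real.sqrt (α ^ 2 - 2 * β * L) with hs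
  have hs2 : s ^ 2 = α ^ 2 - 2 * β * L := Real.sq_sqrt hdisc
  have hsgt : α < s := by
    nlinarith [Real.sqrt_nonneg (α ^ 2 - 2 * β * L), hs2]
  have hMpos : 0 < M := by
    rw [hM]
    exact div_pos_of_neg_of_neg (by linarith) (by linarith)
  have hMne : M ≠ 0 := ne_of_gt hMpos
  have hLne : L ≠ 0 := ne_of_lt hLneg
  have hquad : L * M ^ 2 + α * M + β / 2 = 0 := by
    rw [hM]; field_simp; nlinarith [hs2]
  have hkey : α / M + β / (2 * M ^ 2) = -L := by
    field_simp
    nlinarith [hquad]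
  refine ⟨hLneg, hMpos, ?_⟩
  rw [hkey, neg_neg, hL, Real.exp_log h1c]
  have : (1 : ℝ) - (1 - c) = c := by ring
  rw [this, hc, ← Real.rpow_mul (by norm_num : (0:ℝ) ≤ 1/2),
    one_div_mul_cancel (ne_of_gt hθ), Real.rpow_one]
  ring
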